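/- Let (G, R) be a quasitriangular bialgebra and define a new product ∗ on the dual space G' by (π₁ ∗ π₂)(x) = (π₁ ⊗ π₂)(R Δ(x)). Then ∗ is associative, i.e. (π₁ ∗ π₂) ∗ π₃ = π₁ ∗ (π₂ ∗ π₃) for all π₁, π₂, π₃ ∈ G'. -/

import Mathlib

open TensorProduct

noncomputable section

variable (G : Type*) [Ring G] [Algebra ℂ G]

/-- Embedding of `G ⊗ G` in legs 1,2 of `(G ⊗ G) ⊗ G`. -/
noncomputable def leg12 : (G ⊗[ℂ] G) →ₐ[ℂ] (G ⊗[ℂ] G) ⊗[ℂ] G :=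
  Algebra.TensorProduct.includeLeft

/-- Embedding of `G ⊗ G` in legs 1,3 of `(G ⊗ G) ⊗ G`. -/
noncomputable def leg13 : (G ⊗[ℂ] G) →ₐ[ℂ] (G ⊗[ℂ] G) ⊗[ℂ] G :=
  Algebra.TensorProduct.map
    (Algebra.TensorProduct.includeLeft : G →ₐ[ℂ] G ⊗[ℂ] G) (AlgHom.id ℂ G)

/-- Embedding of `G ⊗ G` in legs 2,3 of `(G ⊗ G) ⊗ G`. -/
noncomputable def leg23 : (G ⊗[ℂ] G) →ₐ[ℂ] (G ⊗[ℂ] G) ⊗[ℂ] G :=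
  Algebra.TensorProduct.map
    (Algebra.TensorProduct.includeRight : G →ₐ[ℂ] G ⊗[ℂ] G) (AlgHom.id ℂ G)

/-- Embedding of `G ⊗ G` in legs 1,2 of `G ⊗ (G ⊗ G)`. -/
noncomputable def leg12' : (G ⊗[ℂ] G) →ₐ[ℂ] G ⊗[ℂ] (G ⊗[ℂ] G) :=
  Algebra.TensorProduct.map (AlgHom.id ℂ G)
    (Algebra.TensorProduct.includeLeft : G →ₐ[ℂ] G ⊗[ℂ] G)

/-- Embedding of `G ⊗ G` in legs 1,3 of `G ⊗ (G ⊗ G)`. -/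
noncomputable def leg13' : (G ⊗[ℂ] G) →ₐ[ℂ] G ⊗[ℂ] (G ⊗[ℂ] G) :=
  Algebra.TensorProduct.map (AlgHom.id ℂ G)
    (Algebra.TensorProduct.includeRight : G →ₐ[ℂ] G ⊗[ℂ] G)


variable {G}

/-- The twisted convolution product on the dual: 
`(π₁ ∗ π₂)(x) = (π₁ ⊗ π₂)(R Δ(x))`. -/
noncomputable def convStar (Δ : G →ₐ[ℂ] G ⊗[ℂ] G) (R : G ⊗[ℂ] G)
    (π₁ π₂ : G →ₗ[ℂ] ℂ) : G →ₗ[ℂ] ℂ :=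
  (TensorProduct.lid ℂ ℂ).toLinearMap
    ∘ₗ TensorProduct.map π₁ π₂
    ∘ₗ LinearMap.mulLeft ℂ R
    ∘ₗ Δ.toLinearMap

/-! ### Auxiliary machinery -/

/-- Embedding of `G ⊗ G` in legs 2,3 of `G ⊗ (G ⊗ G)`. -/
noncomputable def leg23' : (G ⊗[ℂ] G) →ₐ[ℂ] G ⊗[ℂ] (G ⊗[ℂ] G) :=
  Algebra.TensorProduct.includeRight

/-- Swap of the first two legs of `(G ⊗ G) ⊗ G`. -/
noncomputable def swap12 : (G ⊗[ℂ] G) ⊗[ℂ] G →ₐ[ℂ] (G ⊗[ℂ] G) ⊗[ℂ] G :=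
  Algebra.TensorProduct.map
    ((Algebra.TensorProduct.comm ℂ G G : G ⊗[ℂ] G ≃ₐ[ℂ] G ⊗[ℂ] G) : G ⊗[ℂ] G →ₐ[ℂ] G ⊗[ℂ] G)
    (AlgHom.id ℂ G)

lemma assoc_leg12 (z : G ⊗[ℂ] G) :
    (Algebra.TensorProduct.assoc ℂ ℂ ℂ G G G) (leg12 G z) = leg12' G z := by
  induction z using TensorProduct.induction_on with
  | zero => simp
  | tmul a b =>
      simp [leg12, leg12', Algebra.TensorProduct.assoc_tmul]
  | add x y hx hy => simp only [map_add, hx, hy]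

lemma assoc_leg13 (z : G ⊗[ℂ] G) :
    (Algebra.TensorProduct.assoc ℂ ℂ ℂ G G G) (leg13 G z) = leg13' G z := by
  induction z using TensorProduct.induction_on with
  | zero => simp
  | tmul a b =>
      simp [leg13, leg13', Algebra.TensorProduct.assoc_tmul]
  | add x y hx hy => simp only [map_add, hx, hy]

lemma assoc_leg23 (z : G ⊗[ℂ] G) :
    (Algebra.TensorProduct.assoc ℂ ℂ ℂ G G G) (leg23 G z) = leg23' z := by
  induction z using TensorProduct.induction_on with
  | zero => simp
  | tmul a b =>
      simp [leg23, leg23', Algebra.TensorProduct.assoc_tmul]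
  | add x y hx hy => simp only [map_add, hx, hy]

lemma swap12_leg13 (z : G ⊗[ℂ] G) : swap12 (leg13 G z) = leg23 G z := by
  induction z using TensorProduct.induction_on with
  | zero => simp
  | tmul a b => simp [swap12, leg13, leg23]
  | add x y hx hy => simp only [map_add, hx, hy]

lemma swap12_leg23 (z : G ⊗[ℂ] G) : swap12 (leg23 G z) = leg13 G z := by
  induction z using TensorProduct.induction_on with
  | zero => simp
  | tmul a b => simp [swap12, leg13, leg23]
  | add x y hx hy => simp only [map_add, hx, hy]

/-- The commutation relation `R Δ = Δ' R`, lifted to legs 1,2 of the triple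
tensor product. -/
lemma braid12 (Δ : G →ₐ[ℂ] G ⊗[ℂ] G) (R : G ⊗[ℂ] G)
    (hqt3 : ∀ x : G, R * Δ x = (Algebra.TensorProduct.comm ℂ G G) (Δ x) * R)
    (z : G ⊗[ℂ] G) :
    leg12 G R * (Algebra.TensorProduct.map Δ (AlgHom.id ℂ G)) z
      = swap12 ((Algebra.TensorProduct.map Δ (AlgHom.id ℂ G)) z) * leg12 G R := by
  induction z using TensorProduct.induction_on with
  | zero => simp
  | tmul a b =>
      simp only [Algebra.TensorProduct.map_tmul, AlgHom.coe_id, id_eq, leg12,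
        Algebra.TensorProduct.includeLeft_apply, swap12,
        Algebra.TensorProduct.tmul_mul_tmul, one_mul, mul_one, hqt3 a]
      rfl
  | add x y hx hy => simp only [map_add, mul_add, add_mul, hx, hy]

/-- Yang–Baxter equation. -/
lemma ybe (Δ : G →ₐ[ℂ] G ⊗[ℂ] G) (R : G ⊗[ℂ] G)
    (hqt1 : (Algebra.TensorProduct.map Δ (AlgHom.id ℂ G)) R
              = leg13 G R * leg23 G R)
    (hqt3 : ∀ x : G, R * Δ x = (Algebra.TensorProduct.comm ℂ G G) (Δ x) * R) :
    leg12 G R * (leg13 G R * leg23 G R)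
      = leg23 G R * (leg13 G R * leg12 G R) := by
  have h := braid12 Δ R hqt3 R
  rw [hqt1, map_mul, swap12_leg13, swap12_leg23, mul_assoc] at h
  exact h

/-- The triple pairing on `(G ⊗ G) ⊗ G`. -/
noncomputable def trL (π₁ π₂ π₃ : G →ₗ[ℂ] ℂ) : (G ⊗[ℂ] G) ⊗[ℂ] G →ₗ[ℂ] ℂ :=
  (TensorProduct.lid ℂ ℂ).toLinearMap ∘ₗ
    TensorProduct.map
      ((TensorProduct.lid ℂ ℂ).toLinearMap ∘ₗ TensorProduct.map π₁ π₂) π₃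

/-- The triple pairing on `G ⊗ (G ⊗ G)`. -/
noncomputable def trR (π₁ π₂ π₃ : G →ₗ[ℂ] ℂ) : G ⊗[ℂ] (G ⊗[ℂ] G) →ₗ[ℂ] ℂ :=
  (TensorProduct.lid ℂ ℂ).toLinearMap ∘ₗ
    TensorProduct.map π₁
      ((TensorProduct.lid ℂ ℂ).toLinearMap ∘ₗ TensorProduct.map π₂ π₃)

lemma trL_assoc (π₁ π₂ π₃ : G →ₗ[ℂ] ℂ) (w : (G ⊗[ℂ] G) ⊗[ℂ] G) :
    trL π₁ π₂ π₃ w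
      = trR π₁ π₂ π₃ ((Algebra.TensorProduct.assoc ℂ ℂ ℂ G G G) w) := by
  have h : trL π₁ π₂ π₃
      = (trR π₁ π₂ π₃) ∘ₗ (Algebra.TensorProduct.assoc ℂ ℂ ℂ G G G).toLinearMap := by
    apply TensorProduct.ext_threefold
    intro a b c
    simp only [trL, trR, LinearMap.comp_apply, AlgEquiv.toLinearMap_apply,
      Algebra.TensorProduct.assoc_tmul, TensorProduct.map_tmul,
      LinearEquiv.coe_coe, TensorProduct.lid_tmul, smul_eq_mul]
    ring
  rw [h]; rfl

lemma convStar_apply (Δ : G →ₐ[ℂ] G ⊗[ℂ] G) (R : G ⊗[ℂ] G)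
    (π₁ π₂ : G →ₗ[ℂ] ℂ) (x : G) :
    convStar Δ R π₁ π₂ x
      = (TensorProduct.lid ℂ ℂ) (TensorProduct.map π₁ π₂ (R * Δ x)) := by
  simp [convStar, LinearMap.mulLeft_apply]

lemma eval_left (Δ : G →ₐ[ℂ] G ⊗[ℂ] G) (R : G ⊗[ℂ] G)
    (π₁ π₂ π₃ : G →ₗ[ℂ] ℂ) (y : G ⊗[ℂ] G) :
    (TensorProduct.lid ℂ ℂ)
        (TensorProduct.map (convStar Δ R π₁ π₂) π₃ y)
      = trL π₁ π₂ π₃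
          (leg12 G R * (Algebra.TensorProduct.map Δ (AlgHom.id ℂ G)) y) := by
  induction y using TensorProduct.induction_on with
  | zero => simp
  | tmul a b =>
      simp only [TensorProduct.map_tmul, TensorProduct.lid_tmul, smul_eq_mul,
        convStar_apply, Algebra.TensorProduct.map_tmul, AlgHom.coe_id, id_eq,
        leg12, Algebra.TensorProduct.includeLeft_apply,
        Algebra.TensorProduct.tmul_mul_tmul, one_mul, trL,
        LinearMap.comp_apply, LinearEquiv.coe_coe]
  | add x y hx hy => simp only [map_add, mul_add, hx, hy]

lemma eval_right (Δ : G →ₐ[ℂ] G ⊗[ℂ] G) (R : G ⊗[ℂ] G)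
    (π₁ π₂ π₃ : G →ₗ[ℂ] ℂ) (y : G ⊗[ℂ] G) :
    (TensorProduct.lid ℂ ℂ)
        (TensorProduct.map π₁ (convStar Δ R π₂ π₃) y)
      = trR π₁ π₂ π₃
          (leg23' R * (Algebra.TensorProduct.map (AlgHom.id ℂ G) Δ) y) := by
  induction y using TensorProduct.induction_on with
  | zero => simp
  | tmul a b =>
      simp only [TensorProduct.map_tmul, TensorProduct.lid_tmul, smul_eq_mul,
        convStar_apply, Algebra.TensorProduct.map_tmul, AlgHom.coe_id, id_eq,
        leg23', Algebra.TensorProduct.includeRight_apply,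
        Algebra.TensorProduct.tmul_mul_tmul, one_mul, trR,
        LinearMap.comp_apply, LinearEquiv.coe_coe]
  | add x y hx hy => simp only [map_add, mul_add, hx, hy]

/-- For a quasitriangular bialgebra `(G, Δ, R)`, the twisted product
`(π₁ ∗ π₂)(x) = (π₁ ⊗ π₂)(R Δ(x))` on the dual `G'` is associative. -/
theorem stmt17 (Δ : G →ₐ[ℂ] G ⊗[ℂ] G) (R Rinv : G ⊗[ℂ] G)
    (hinv : R * Rinv = 1) (hinv' : Rinv * R = 1)
    -- coassociativity of Δ
    (hcoassoc : ∀ x : G,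
      (Algebra.TensorProduct.assoc ℂ ℂ ℂ G G G)
          ((Algebra.TensorProduct.map Δ (AlgHom.id ℂ G)) (Δ x))
        = (Algebra.TensorProduct.map (AlgHom.id ℂ G) Δ) (Δ x))
    -- quasitriangularity
    (hqt1 : (Algebra.TensorProduct.map Δ (AlgHom.id ℂ G)) R
              = leg13 G R * leg23 G R)
    (hqt2 : (Algebra.TensorProduct.map (AlgHom.id ℂ G) Δ) R
              = leg13' G R * leg12' G R)
    (hqt3 : ∀ x : G, R * Δ x = (Algebra.TensorProduct.comm ℂ G G) (Δ x) * R) :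
    ∀ π₁ π₂ π₃ : G →ₗ[ℂ] ℂ,
      convStar Δ R (convStar Δ R π₁ π₂) π₃
        = convStar Δ R π₁ (convStar Δ R π₂ π₃) := by
  intro π₁ π₂ π₃
  ext x
  rw [convStar_apply, convStar_apply, eval_left Δ R π₁ π₂ π₃,
    eval_right Δ R π₁ π₂ π₃, trL_assoc]
  congr 1
  have h1 : (Algebra.TensorProduct.map Δ (AlgHom.id ℂ G)) (R * Δ x)
      = leg13 G R * leg23 G R
        * (Algebra.TensorProduct.map Δ (AlgHom.id ℂ G)) (Δ x) := by
    rw [map_mul, hqt1]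
  rw [h1]
  simp only [← mul_assoc]
  have hy : leg12 G R * leg13 G R * leg23 G R
      = leg23 G R * leg13 G R * leg12 G R := by
    have h := ybe Δ R hqt1 hqt3
    simp only [← mul_assoc] at h
    exact h
  rw [hy]
  simp only [map_mul]
  rw [assoc_leg12, assoc_leg13, assoc_leg23, hcoassoc x, hqt2]
  simp only [mul_assoc]
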